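/- Let Δ be a finite simplicial complex having at least one nonempty face, whose facets are listed in a shelling order F_1, …, F_r, with restriction map R. Then there exists an acyclic matching M on the set of nonempty faces of Δ such that the faces not occurring in any pair of M are exactly the spanning facets (the facets F_i with R(F_i) = F_i) together with exactly one additional singleton face {v} for some vertex v ∈ F_1. -/

import Mathlib

/-- A matching on a family `P` of finite sets: a set of pairs `(σ, τ)` with `σ ⊆ τ` and
`|τ| = |σ| + 1`, such that every member of `P` occurs in at most one pair. -/
def IsMatching {V : Type*} (P : Set (Finset V)) (M : Set (Finset V × Finset V)) : Prop :=
  (∀ p ∈ M, p.1 ∈ P ∧ p.2 ∈ P ∧ p.1 ⊆ p.2 ∧ p.2.card = p.1.card + 1) ∧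
  (∀ p ∈ M, ∀ q ∈ M, ∀ σ : Finset V,
      (σ = p.1 ∨ σ = p.2) → (σ = q.1 ∨ σ = q.2) → p = q)

/-- An acyclic matching: a matching with no cycle `(σ₁, τ₁), …, (σ_m, τ_m)` (`m ≥ 2`,
the `τ_i` pairwise distinct) with `σ_i ⊆ τ_{i+1}` and `|τ_{i+1}| = |σ_i| + 1`, indices
taken modulo `m`. -/
def IsAcyclicMatching {V : Type*} (P : Set (Finset V))
    (M : Set (Finset V × Finset V)) : Prop :=
  IsMatching P M ∧
  ¬ ∃ (m : ℕ) (_ : 2 ≤ m) (σ τ : ZMod m → Finset V),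
      Function.Injective τ ∧
      (∀ i : ZMod m, (σ i, τ i) ∈ M) ∧
      (∀ i : ZMod m, σ i ⊆ τ (i + 1) ∧ (τ (i + 1)).card = (σ i).card + 1)

/-- The least index of a facet containing `σ` (junk value if none). -/
noncomputable def sIdx {V : Type*} [DecidableEq V] {r : ℕ} (hr : 0 < r)
    (F : Fin r → Finset V) (σ : Finset V) : Fin r :=
  if h : (Finset.univ.filter (fun i => σ ⊆ F i)).Nonempty
  then (Finset.univ.filter (fun i => σ ⊆ F i)).min' h else ⟨0, hr⟩

lemma sIdx_le {V : Type*} [DecidableEq V] {r : ℕ} (hr : 0 < r)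
    (F : Fin r → Finset V) {σ : Finset V} {l : Fin r}
    (h : σ ⊆ F l) : sIdx hr F σ ≤ l := by
  unfold sIdx
  have hne : (Finset.univ.filter (fun i => σ ⊆ F i)).Nonempty := ⟨l, by simp [h]⟩
  rw [dif_pos hne]
  exact Finset.min'_le _ _ (by simp [h])

lemma subset_sIdx {V : Type*} [DecidableEq V] {r : ℕ} (hr : 0 < r)
    (F : Fin r → Finset V) {σ : Finset V}
    (h : ∃ l, σ ⊆ F l) : σ ⊆ F (sIdx hr F σ) := by
  obtain ⟨l, hl⟩ := h
  unfold sIdx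
  have hne : (Finset.univ.filter (fun i => σ ⊆ F i)).Nonempty := ⟨l, by simp [hl]⟩
  rw [dif_pos hne]
  have := Finset.min'_mem _ hne
  simpa using this

/-- A shelling order on the facets of a finite simplicial complex induces an acyclic
matching on the nonempty faces whose unmatched faces are exactly the spanning facets
together with one singleton face `{v}` with `v ∈ F₁`. -/
theorem shelling_gives_optimal_acyclic_matching
    {V : Type*} [DecidableEq V]
    (Δ : Finset (Finset V))
    (hdc : ∀ σ ∈ Δ, ∀ τ : Finset V, τ ⊆ σ → τ ∈ Δ)
    (hne : ∃ σ ∈ Δ, σ ≠ ∅)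
    (r : ℕ) (hr : 0 < r) (F : Fin r → Finset V)
    -- `F` lists exactly the facets of `Δ`
    (hF : ∀ i, F i ∈ Δ ∧ ∀ σ ∈ Δ, F i ⊆ σ → F i = σ)
    (hsurj : ∀ σ ∈ Δ, (∀ τ ∈ Δ, σ ⊆ τ → σ = τ) → ∃ i, F i = σ)
    -- the list is a shelling order
    (hshell : ∀ i j : Fin r, i < j → ∃ l : Fin r, l < j ∧
        F i ∩ F j ⊆ F l ∩ F j ∧ (F l ∩ F j).card = (F j).card - 1) :
    ∃ M : Set (Finset V × Finset V),
      IsAcyclicMatching {σ : Finset V | σ ∈ Δ ∧ σ ≠ ∅} M ∧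
      ∃ v ∈ F ⟨0, hr⟩,
        ∀ σ ∈ Δ, σ ≠ ∅ →
          ((∀ p ∈ M, σ ≠ p.1 ∧ σ ≠ p.2) ↔
            ((∃ i : Fin r, F i = σ ∧
                ∀ x ∈ F i, ∃ j : Fin r, j < i ∧ (F i).erase x ⊆ F j) ∨
              σ = {v})) := by
  classical
  obtain ⟨σ₀, hσ₀, hσ₀ne⟩ := hne
  -- every facet is nonempty
  have hFne : ∀ i, F i ≠ ∅ := by
    intro i h
    have heq : F i = σ₀ := (hF i).2 σ₀ hσ₀ (by rw [h]; exact Finset.empty_subset σ₀)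
    rw [heq] at h
    exact hσ₀ne h
  have hFcard : ∀ i, 1 ≤ (F i).card := fun i =>
    Finset.card_pos.2 (Finset.nonempty_iff_ne_empty.2 (hFne i))
  -- every face is contained in some facet
  have hexF : ∀ σ ∈ Δ, ∃ l, σ ⊆ F l := by
    intro σ hσ
    have hne' : (Δ.filter (fun τ => σ ⊆ τ)).Nonempty := ⟨σ, by simp [hσ]⟩
    obtain ⟨τ, hτmem, hτmax⟩ :=
      Finset.exists_max_image (Δ.filter (fun τ => σ ⊆ τ)) Finset.card hne'
    simp only [Finset.mem_filter] at hτmem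
    have hmax : ∀ ρ ∈ Δ, τ ⊆ ρ → τ = ρ := by
      intro ρ hρ hsub
      refine Finset.eq_of_subset_of_card_le hsub ?_
      exact hτmax ρ (by simp [hρ, hτmem.2.trans hsub])
    obtain ⟨i, hi⟩ := hsurj τ hτmem.1 hmax
    exact ⟨i, hi ▸ hτmem.2⟩
  set J : Finset V → Fin r := sIdx hr F with hJdef
  have JF : ∀ σ ∈ Δ, σ ⊆ F (J σ) := fun σ h => subset_sIdx hr F (hexF σ h)
  have Jle : ∀ {σ : Finset V} {l : Fin r}, σ ⊆ F l → J σ ≤ l :=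
    fun h => sIdx_le hr F h
  have hzero_le : ∀ l : Fin r, (⟨0, hr⟩ : Fin r) ≤ l := fun l => by
    simp [Fin.le_def]
  have hnotlt0 : ∀ l : Fin r, ¬ l < (⟨0, hr⟩ : Fin r) := fun l h => by
    simp [Fin.lt_def] at h
  have hJempty : J ∅ = ⟨0, hr⟩ :=
    le_antisymm (Jle (Finset.empty_subset _)) (hzero_le _)
  -- spanning predicate
  set Spn : Fin r → Prop :=
    fun i => ∀ y ∈ F i, ∃ l, l < i ∧ (F i).erase y ⊆ F l with hSpndef
  have hSpn0 : ¬ Spn ⟨0, hr⟩ := by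
    intro h
    obtain ⟨y, hy⟩ := Finset.nonempty_iff_ne_empty.2 (hFne ⟨0, hr⟩)
    obtain ⟨l, hl, -⟩ := h y hy
    exact hnotlt0 l hl
  have hNV : Nonempty V := by
    obtain ⟨y, _⟩ := Finset.nonempty_iff_ne_empty.2 (hFne ⟨0, hr⟩)
    exact ⟨y⟩
  -- choose a free vertex for each nonspanning facet
  have hxex : ∀ j : Fin r, ∃ y : V, ¬ Spn j →
      y ∈ F j ∧ ¬ ∃ l, l < j ∧ (F j).erase y ⊆ F l := by
    intro j
    by_cases h : Spn j
    · exact ⟨Classical.arbitrary V, fun hc => absurd h hc⟩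
    · have h' : ¬ ∀ y ∈ F j, ∃ l, l < j ∧ (F j).erase y ⊆ F l := h
      push_neg at h'
      obtain ⟨y, hy1, hy2⟩ := h'
      refine ⟨y, fun _ => ⟨hy1, ?_⟩⟩
      push_neg
      exact hy2
  choose x hx using hxex
  -- facets are "new" at their own index
  have hFnotsub : ∀ {l i : Fin r}, l < i → ¬ F i ⊆ F l := by
    intro l i hli hsub
    have heq : F i = F l := (hF i).2 (F l) (hF l).1 hsub
    obtain ⟨l', hl', hsub', hcard'⟩ := hshell l i hli
    have h1 : F i ⊆ F l' ∩ F i := by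
      intro a ha
      refine hsub' (Finset.mem_inter.2 ⟨?_, ha⟩)
      rw [← heq]; exact ha
    have h2 : (F l' ∩ F i).card = (F i).card :=
      le_antisymm (Finset.card_le_card Finset.inter_subset_right)
        (Finset.card_le_card h1)
    have := hFcard i
    omega
  have hJF : ∀ i, J (F i) = i := by
    intro i
    refine le_antisymm (Jle (subset_refl _)) ?_
    by_contra h
    push_neg at h
    exact hFnotsub h (JF (F i) (hF i).1)
  -- the restriction set is contained in every face of its interval
  have L1 : ∀ σ ∈ Δ, ∀ y ∈ F (J σ),
      (∃ l, l < J σ ∧ (F (J σ)).erase y ⊆ F l) → y ∈ σ := by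
    rintro σ hσ y hy ⟨l, hl, hsub⟩
    by_contra hys
    have h1 : σ ⊆ (F (J σ)).erase y := Finset.subset_erase.2 ⟨JF σ hσ, hys⟩
    have h2 : J σ ≤ l := Jle (h1.trans hsub)
    exact absurd hl (not_lt.2 h2)
  -- erasing the free vertex stays in the same interval
  have L2 : ∀ σ ∈ Δ, ¬ Spn (J σ) → x (J σ) ∈ σ →
      J (σ.erase (x (J σ))) = J σ := by
    intro σ hσ hns hxσ
    set j := J σ with hjdef
    refine le_antisymm (Jle ((Finset.erase_subset _ _).trans (JF σ hσ))) ?_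
    by_contra h
    push_neg at h
    set l := J (σ.erase (x j)) with hldef
    have hτ'Δ : σ.erase (x j) ∈ Δ := hdc σ hσ _ (Finset.erase_subset _ _)
    have hτ'l : σ.erase (x j) ⊆ F l := JF _ hτ'Δ
    obtain ⟨l', hl', hsub', hcard'⟩ := hshell l j h
    have hneq : F l' ∩ F j ≠ F j := by
      intro he
      rw [he] at hcard'
      have := hFcard j
      omega
    have hss : F l' ∩ F j ⊂ F j :=
      Finset.ssubset_iff_subset_ne.2 ⟨Finset.inter_subset_right, hneq⟩
    obtain ⟨y, hyj, hynotin⟩ := Finset.exists_of_ssubset hss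
    have hinter_eq : F l' ∩ F j = (F j).erase y := by
      refine Finset.eq_of_subset_of_card_le ?_ ?_
      · intro a ha
        refine Finset.mem_erase.2 ⟨?_, (Finset.mem_inter.1 ha).2⟩
        intro he; exact hynotin (he ▸ ha)
      · rw [Finset.card_erase_of_mem hyj, hcard']
    have herasey : (F j).erase y ⊆ F l' := by
      rw [← hinter_eq]; exact Finset.inter_subset_left
    have hyR : ∃ l₀, l₀ < j ∧ (F j).erase y ⊆ F l₀ := ⟨l', hl', herasey⟩
    have hyx : y ≠ x j := by
      intro he
      exact (hx j hns).2 (he ▸ hyR)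
    have hyσ : y ∈ σ := L1 σ hσ y hyj hyR
    have hyτ' : y ∈ σ.erase (x j) := Finset.mem_erase.2 ⟨hyx, hyσ⟩
    have hsubinter : σ.erase (x j) ⊆ F l ∩ F j :=
      Finset.subset_inter hτ'l ((Finset.erase_subset _ _).trans (JF σ hσ))
    have : y ∈ (F j).erase y := hinter_eq ▸ hsub' (hsubinter hyτ')
    exact (Finset.notMem_erase y _) this
  -- inserting the free vertex stays in the complex and in the same interval
  have L3 : ∀ σ ∈ Δ, ¬ Spn (J σ) → x (J σ) ∉ σ →
      insert (x (J σ)) σ ∈ Δ ∧ J (insert (x (J σ)) σ) = J σ := by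
    intro σ hσ hns hxσ
    have hsubF : insert (x (J σ)) σ ⊆ F (J σ) :=
      Finset.insert_subset (hx _ hns).1 (JF σ hσ)
    have hmem : insert (x (J σ)) σ ∈ Δ := hdc _ (hF _).1 _ hsubF
    refine ⟨hmem, le_antisymm (Jle hsubF) ?_⟩
    exact Jle ((Finset.subset_insert _ _).trans (JF _ hmem))
  -- a spanning interval is a singleton
  have L4 : ∀ σ ∈ Δ, Spn (J σ) → σ = F (J σ) := by
    intro σ hσ hs
    refine Finset.Subset.antisymm (JF σ hσ) ?_
    intro y hy
    exact L1 σ hσ y hy (hs y hy)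
  -- the matching
  set M : Set (Finset V × Finset V) :=
    {p | ∃ σ : Finset V, σ ∈ Δ ∧ σ ≠ ∅ ∧ ¬ Spn (J σ) ∧ x (J σ) ∉ σ ∧
      p = (σ, insert (x (J σ)) σ)} with hMdef
  have hMfst : ∀ p ∈ M, p.1 ∈ Δ ∧ p.1 ≠ ∅ ∧ ¬ Spn (J p.1) ∧ x (J p.1) ∉ p.1 ∧
      p.2 = insert (x (J p.1)) p.1 := by
    rintro p ⟨σ, h1, h2, h3, h4, rfl⟩
    exact ⟨h1, h2, h3, h4, rfl⟩
  have hMsnd : ∀ p ∈ M, p.2 ∈ Δ ∧ p.2 ≠ ∅ ∧ J p.2 = J p.1 ∧ x (J p.2) ∈ p.2 ∧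
      p.1 = p.2.erase (x (J p.2)) := by
    intro p hp
    obtain ⟨h1, h2, h3, h4, h5⟩ := hMfst p hp
    obtain ⟨hmem, hJeq⟩ := L3 p.1 h1 h3 h4
    refine ⟨by rw [h5]; exact hmem, by rw [h5]; exact Finset.insert_ne_empty _ _,
      by rw [h5]; exact hJeq, ?_, ?_⟩
    · rw [h5, hJeq]
      · exact Finset.mem_insert_self _ _
    · rw [h5, hJeq]
      · exact (Finset.erase_insert h4).symm
  refine ⟨M, ⟨⟨?_, ?_⟩, ?_⟩, ?_⟩
  · -- first matching condition
    intro p hp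
    obtain ⟨h1, h2, h3, h4, h5⟩ := hMfst p hp
    obtain ⟨g1, g2, g3, g4, g5⟩ := hMsnd p hp
    refine ⟨⟨h1, h2⟩, ⟨g1, g2⟩, by rw [h5]; exact Finset.subset_insert _ _, ?_⟩
    rw [h5]
    exact Finset.card_insert_of_notMem h4
  · -- uniqueness: each face in at most one pair
    have hne12 : ∀ p ∈ M, ∀ q ∈ M, p.1 ≠ q.2 := by
      intro p hp q hq he
      have h4 := (hMfst p hp).2.2.2.1
      have g4 := (hMsnd q hq).2.2.2.1
      rw [← he] at g4
      exact h4 g4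
    intro p hp q hq σ hσp hσq
    rcases hσp with rfl | rfl <;> rcases hσq with h | h
    · have h5 := (hMfst p hp).2.2.2.2
      have h5' := (hMfst q hq).2.2.2.2
      refine Prod.ext h ?_
      rw [h5, h5', h]
    · exact absurd h (hne12 p hp q hq)
    · exact absurd h.symm (hne12 q hq p hp)
    · have g5 := (hMsnd p hp).2.2.2.2
      have g5' := (hMsnd q hq).2.2.2.2
      refine Prod.ext ?_ h
      rw [g5, g5', h]
  · -- acyclicity
    rintro ⟨m, hm, σc, τc, hinj, hmem, hstep⟩
    haveI : NeZero m := ⟨by omega⟩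
    haveI : Fact (1 < m) := ⟨by omega⟩
    have hJτσ : ∀ i, J (τc i) = J (σc i) := fun i => (hMsnd _ (hmem i)).2.2.1
    have hJmono : ∀ i : ZMod m, J (σc i) ≤ J (σc (i + 1)) := by
      intro i
      have h1 : σc i ⊆ τc (i + 1) := (hstep i).1
      have h2 : τc (i + 1) ⊆ F (J (τc (i + 1))) := JF _ (hMsnd _ (hmem (i + 1))).1
      have h3 := Jle (h1.trans h2)
      rwa [hJτσ] at h3
    set g : ℕ → ℕ := fun n => (J (σc (n : ZMod m))).val with hgdef
    have hgmono : Monotone g := by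
      refine monotone_nat_of_le_succ ?_
      intro n
      have h := hJmono (n : ZMod m)
      simp only [hgdef]
      rw [Nat.cast_succ]
      exact h
    have hconst : ∀ i : ZMod m, J (σc i) = J (σc 0) := by
      intro i
      have h1 : g 0 ≤ g i.val := hgmono (Nat.zero_le _)
      have h2 : g i.val ≤ g m := hgmono (le_of_lt (ZMod.val_lt i))
      have h3 : g m = g 0 := by simp [hgdef, ZMod.natCast_self]
      have h4 : g i.val = g 0 := le_antisymm (h3 ▸ h2) h1
      have h5 : ((i.val : ℕ) : ZMod m) = i := ZMod.natCast_rightInverse i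
      apply Fin.ext
      simpa [hgdef, h5, Nat.cast_zero] using h4
    have hτeq : ∀ i : ZMod m, τc i = insert (x (J (σc 0))) (σc i) := by
      intro i
      have h5 := (hMfst _ (hmem i)).2.2.2.2
      rw [hconst i] at h5
      exact h5
    have hxnot : ∀ i, x (J (σc 0)) ∉ σc i := by
      intro i
      have h4 := (hMfst _ (hmem i)).2.2.2.1
      rwa [hconst i] at h4
    have hτstep : ∀ i : ZMod m, τc (i + 1) = τc i := by
      intro i
      have hsub : insert (x (J (σc 0))) (σc i) ⊆ τc (i + 1) := by
        refine Finset.insert_subset ?_ (hstep i).1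
        rw [hτeq (i + 1)]
        exact Finset.mem_insert_self _ _
      have hcard : (τc (i + 1)).card ≤ (insert (x (J (σc 0))) (σc i)).card := by
        rw [Finset.card_insert_of_notMem (hxnot i), (hstep i).2]
      have heq := (Finset.eq_of_subset_of_card_le hsub hcard).symm
      rw [hτeq i]
      exact heq
    have h01 : (0 : ZMod m) + 1 = 0 := hinj (hτstep 0)
    rw [zero_add] at h01
    exact one_ne_zero h01
  · -- characterization of unmatched faces
    refine ⟨x ⟨0, hr⟩, (hx _ hSpn0).1, ?_⟩
    intro σ hσ hσne
    constructor
    · intro hun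
      by_cases hs : Spn (J σ)
      · exact Or.inl ⟨J σ, (L4 σ hσ hs).symm, hs⟩
      · by_cases hxσ : x (J σ) ∈ σ
        · by_cases he : σ.erase (x (J σ)) = ∅
          · right
            have hσeq : σ = {x (J σ)} := by
              rcases (Finset.erase_eq_empty_iff σ (x (J σ))).1 he with h | h
              · exact absurd h hσne
              · exact h
            have hJ0 : J σ = ⟨0, hr⟩ := by
              have h2 := L2 σ hσ hs hxσ
              rw [he, hJempty] at h2
              exact h2.symm
            rw [hσeq, hJ0]
          · have hJ' : J (σ.erase (x (J σ))) = J σ := L2 σ hσ hs hxσ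
            have hp : (σ.erase (x (J σ)),
                insert (x (J (σ.erase (x (J σ))))) (σ.erase (x (J σ)))) ∈ M :=
              ⟨σ.erase (x (J σ)), hdc σ hσ _ (Finset.erase_subset _ _), he,
                by rw [hJ']; exact hs, by rw [hJ']; exact Finset.notMem_erase _ _, rfl⟩
            exact ((hun _ hp).2 (show σ =
              insert (x (J (σ.erase (x (J σ))))) (σ.erase (x (J σ))) by
                rw [hJ', Finset.insert_erase hxσ])).elim
        · exact absurd rfl ((hun (σ, insert (x (J σ)) σ) ⟨σ, hσ, hσne, hs, hxσ, rfl⟩).1)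
    · rintro (⟨i, hFi, hspn⟩ | rfl)
      · have hJσ : J σ = i := by rw [← hFi, hJF]
        have hsσ : Spn (J σ) := by rw [hJσ]; exact hspn
        intro p hp
        obtain ⟨h1, h2, h3, h4, h5⟩ := hMfst p hp
        constructor
        · intro he
          rw [← he] at h3
          exact h3 hsσ
        · intro he
          have g3 := (hMsnd p hp).2.2.1
          rw [← he] at g3
          rw [g3] at hsσ
          exact h3 hsσ
      · have hJv : J {x ⟨0, hr⟩} = ⟨0, hr⟩ :=
          le_antisymm (Jle (Finset.singleton_subset_iff.2 (hx _ hSpn0).1)) (hzero_le _)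
        intro p hp
        obtain ⟨h1, h2, h3, h4, h5⟩ := hMfst p hp
        obtain ⟨g1, g2, g3, g4, g5⟩ := hMsnd p hp
        constructor
        · intro he
          rw [← he, hJv] at h4
          exact h4 (Finset.mem_singleton_self _)
        · intro he
          have : p.1 = ∅ := by
            rw [g5, ← he, hJv]
            exact Finset.erase_singleton _
          exact h2 this
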